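/- With sequences (aₙ), (bₙ) and k as in the conditions (1),(2),(4),(6),(7) of Lemma 3.1, define ψ : [0,∞) → [0,1] piecewise by ψ(t) = 0 on [b_{2n−2}, a_{2n−1}), ψ(t) = (t − a_{2n−1})/(b_{2n−1} − a_{2n−1}) on [a_{2n−1}, b_{2n−1}), ψ(t) = 1 on [b_{2n−1}, a_{2n}), and ψ(t) = (b_{2n} − t)/(b_{2n} − a_{2n}) on [a_{2n}, b_{2n}). Then if aₙ ≤ t < a_{n+1} and |u − t| ≤ t^(1/k), we have |ψ(t) − ψ(u)| < 1/2^n. -/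

import Mathlib

lemma aux_rpow_diff_le {p x y : ℝ} (hp0 : 0 ≤ p) (hp1 : p ≤ 1) (hx : 1 ≤ x) (hxy : x ≤ y) :
    y ^ p - x ^ p ≤ y - x := by
  have hx0 : (0:ℝ) < x := lt_of_lt_of_le one_pos hx
  have hs0 : 0 ≤ (y - x) / x := div_nonneg (by linarith) hx0.le
  have hy : y = x * (1 + (y - x) / x) := by field_simp; ring
  have h1 : y ^ p = x ^ p * (1 + (y - x) / x) ^ p := by
    rw [← Real.mul_rpow hx0.le (by linarith), ← hy]
  have h2 : (1 + (y - x) / x) ^ p ≤ 1 + p * ((y - x) / x) :=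
    rpow_one_add_le_one_add_mul_self (by linarith) hp0 hp1
  have hxp0 : 0 < x ^ p := Real.rpow_pos_of_pos hx0 p
  have h3 : y ^ p ≤ x ^ p + p * (x ^ p * ((y - x) / x)) := by
    rw [h1]; nlinarith
  have h4 : x ^ p * ((y - x) / x) = x ^ (p - 1) * (y - x) := by
    rw [Real.rpow_sub hx0, Real.rpow_one]; ring
  have h5 : x ^ (p - 1) ≤ 1 := Real.rpow_le_one_of_one_le_of_nonpos hx (by linarith)
  have h6 : 0 ≤ y - x := by linarith
  have h7 : 0 ≤ x ^ (p - 1) := Real.rpow_nonneg hx0.le _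
  rw [h4] at h3
  have hA : x ^ (p - 1) * (y - x) ≤ y - x := by nlinarith
  have h8 : p * (x ^ (p - 1) * (y - x)) ≤ x ^ (p - 1) * (y - x) := by
    nlinarith [mul_nonneg h7 h6]
  linarith

set_option maxHeartbeats 1000000 in


/-- Claim 3.2.2: with sequences `(aₙ)`, `(bₙ)` and `k ≥ 3` as in Lemma 3.1 and
`ψ` the piecewise-linear function of Proposition 3.2, if `aₙ ≤ t < a_{n+1}` and
`|u − t| ≤ t ^ (1/k)` then `|ψ(t) − ψ(u)| < 1/2ⁿ`. -/
theorem stmt10 (k : ℕ) (hk : 3 ≤ k) (a b : ℕ → ℝ)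
    (hb0 : b 0 = 0)
    (hord : ∀ n, 1 ≤ n → b (n - 1) < a n ∧ a n < b n)
    (h1 : ∀ n, 1 ≤ n → (a n) ^ ((1:ℝ)/k) > 2 ^ n)
    (h2 : ∀ n, 1 ≤ n → b (n - 1) + (b (n - 1)) ^ ((1:ℝ)/k) < a n)
    (h4 : ∀ n, 1 ≤ n → b n = a n + (a n) ^ ((2:ℝ)/k))
    (h6 : ∀ n, 1 ≤ n → a n - b (n - 1) > 2 ^ (n - 1) * (a n) ^ ((1:ℝ)/k))
    (h7 : ∀ n, 1 ≤ n → b n - a n > 2 ^ n * (b n) ^ ((1:ℝ)/k))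
    (ψ : ℝ → ℝ)
    (hψ0 : ∀ n, 1 ≤ n → ∀ t, b (2*n - 2) ≤ t → t < a (2*n - 1) → ψ t = 0)
    (hψup : ∀ n, 1 ≤ n → ∀ t, a (2*n - 1) ≤ t → t < b (2*n - 1) →
      ψ t = (t - a (2*n - 1)) / (b (2*n - 1) - a (2*n - 1)))
    (hψ1 : ∀ n, 1 ≤ n → ∀ t, b (2*n - 1) ≤ t → t < a (2*n) → ψ t = 1)
    (hψdown : ∀ n, 1 ≤ n → ∀ t, a (2*n) ≤ t → t < b (2*n) →
      ψ t = (b (2*n) - t) / (b (2*n) - a (2*n))) :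
    ∀ n, 1 ≤ n → ∀ t u : ℝ, a n ≤ t → t < a (n + 1) →
      |u - t| ≤ t ^ ((1:ℝ)/k) → |ψ t - ψ u| < 1 / 2 ^ n := by
  have hkR : (3:ℝ) ≤ (k:ℝ) := by exact_mod_cast hk
  have hp0 : 0 < (1:ℝ)/(k:ℝ) := div_pos one_pos (by linarith)
  have hp1 : (1:ℝ)/(k:ℝ) ≤ 1 := by
    rw [div_le_one (by linarith)]; linarith
  have hp1' : (1:ℝ)/(k:ℝ) < 1 := by
    rw [div_lt_one (by linarith)]; linarith
  -- positivity of the sequences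
  have bpos : ∀ n, 0 ≤ b n := by
    intro n
    induction n with
    | zero => simp [hb0]
    | succ m ih =>
      have h := hord (m+1) (by omega)
      simp only [Nat.add_sub_cancel] at h
      linarith [h.1, h.2]
  have apos : ∀ n, 1 ≤ n → 0 < a n := by
    intro n hn
    exact lt_of_le_of_lt (bpos (n-1)) (hord n hn).1
  have a_gt_one : ∀ n, 1 ≤ n → 1 < a n := by
    intro n hn
    by_contra h
    push_neg at h
    have h2' : (a n) ^ ((1:ℝ)/(k:ℝ)) ≤ 1 := Real.rpow_le_one (apos n hn).le h hp0.le
    have h3 := h1 n hn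
    have h4' : (2:ℝ) ≤ 2 ^ n := by
      calc (2:ℝ) = 2^1 := (pow_one 2).symm
      _ ≤ 2^n := pow_le_pow_right₀ one_le_two hn
    linarith
  -- the flat/linear description with signs
  set c : ℕ → ℝ := fun m => if m % 2 = 1 then 0 else 1 with hc
  have hcflip : ∀ m, c (m+1) = 1 - c m := by
    intro m
    rcases Nat.even_or_odd m with h | h
    · have e1 : m % 2 = 0 := Nat.even_iff.mp h
      have e2 : (m+1) % 2 = 1 := by omega
      simp [hc, e1, e2]
    · have e1 : m % 2 = 1 := Nat.odd_iff.mp h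
      have e2 : (m+1) % 2 = 0 := by omega
      simp [hc, e1, e2]
  have habs_s : ∀ m, |1 - 2 * c m| = 1 := by
    intro m
    by_cases h : m % 2 = 1 <;> simp [hc, h] <;> norm_num
  have hflat : ∀ m, 1 ≤ m → ∀ x, b (m-1) ≤ x → x < a m → ψ x = c m := by
    intro m hm x hx1 hx2
    rcases Nat.even_or_odd m with h | h
    · obtain ⟨j, hj⟩ := h
      have hj1 : 1 ≤ j := by omega
      have e1 : 2*j = m := by omega
      have e2 : 2*j - 1 = m - 1 := by omega
      have hv := hψ1 j hj1 x (by rw [e2]; exact hx1) (by rw [e1]; exact hx2)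
      have e3 : m % 2 = 0 := by omega
      rw [hv, hc]; simp [e3]
    · obtain ⟨j, hj⟩ := h
      have e1 : 2*(j+1) - 1 = m := by omega
      have e2 : 2*(j+1) - 2 = m - 1 := by omega
      have hv := hψ0 (j+1) (by omega) x (by rw [e2]; exact hx1) (by rw [e1]; exact hx2)
      have e3 : m % 2 = 1 := by omega
      rw [hv, hc]; simp [e3]
  have hlin : ∀ m, 1 ≤ m → ∀ x, a m ≤ x → x < b m →
      ψ x = c m + (1 - 2 * c m) * ((x - a m)/(b m - a m)) := by
    intro m hm x hx1 hx2
    have hab : a m < b m := (hord m hm).2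
    have hne : b m - a m ≠ 0 := by linarith
    rcases Nat.even_or_odd m with h | h
    · obtain ⟨j, hj⟩ := h
      have hj1 : 1 ≤ j := by omega
      have e1 : 2*j = m := by omega
      have hv := hψdown j hj1 x (by rw [e1]; exact hx1) (by rw [e1]; exact hx2)
      rw [e1] at hv
      have e3 : m % 2 = 0 := by omega
      rw [hv, hc]; simp only [e3]; norm_num
      field_simp
      ring
    · obtain ⟨j, hj⟩ := h
      have e1 : 2*(j+1) - 1 = m := by omega
      have hv := hψup (j+1) (by omega) x (by rw [e1]; exact hx1) (by rw [e1]; exact hx2)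
      rw [e1] at hv
      have e3 : m % 2 = 1 := by omega
      rw [hv, hc]; simp only [e3]; norm_num
  -- main argument
  intro n hn t u hat hta htu
  have han1 : 1 < a n := a_gt_one n hn
  have hanb : a n < b n := (hord n hn).2
  have hba := h7 n hn
  have hbn1 : 1 < b n := lt_trans han1 hanb
  have hban1 : b n < a (n+1) := by
    have := (hord (n+1) (by omega)).1
    simpa using this
  have han1b : a (n+1) < b (n+1) := (hord (n+1) (by omega)).2
  have hb1n := h7 (n+1) (by omega)
  have ht1 : 1 < t := lt_of_lt_of_le han1 hat
  have htpos : (0:ℝ) < t := by linarith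
  have htp_pos : 0 < t ^ ((1:ℝ)/(k:ℝ)) := Real.rpow_pos_of_pos htpos _
  have h2n_pos : (0:ℝ) < 2 ^ n := by positivity
  have hbnp_pos : 0 < (b n) ^ ((1:ℝ)/(k:ℝ)) := Real.rpow_pos_of_pos (by linarith) _
  have hb1p_pos : 0 < (b (n+1)) ^ ((1:ℝ)/(k:ℝ)) := Real.rpow_pos_of_pos (by linarith) _
  have habs := abs_le.mp htu
  have key_frac : ∀ X : ℝ, X ≤ (b n) ^ ((1:ℝ)/(k:ℝ)) → X / (b n - a n) < 1 / 2 ^ n := by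
    intro X hX
    rw [div_lt_div_iff₀ (by linarith) h2n_pos]
    nlinarith [mul_le_mul_of_nonneg_right hX h2n_pos.le]
  have key_frac1 : ∀ X : ℝ, X ≤ (b (n+1)) ^ ((1:ℝ)/(k:ℝ)) →
      X / (b (n+1) - a (n+1)) < 1 / 2 ^ n := by
    intro X hX
    rw [div_lt_div_iff₀ (by linarith) h2n_pos]
    have h2e : (2:ℝ)^(n+1) = 2 * 2^n := by ring
    nlinarith [mul_le_mul_of_nonneg_right hX h2n_pos.le]
  by_cases htb : t < b n
  · -- Case A : t in the linear piece [a n, b n)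
    have hψt := hlin n hn t hat htb
    have htp_le : t ^ ((1:ℝ)/(k:ℝ)) ≤ (b n) ^ ((1:ℝ)/(k:ℝ)) :=
      Real.rpow_le_rpow htpos.le htb.le hp0.le
    have hun1 : b (n - 1) ≤ u := by
      rcases eq_or_lt_of_le hn with h | h
      · -- n = 1
        have hts : t ^ ((1:ℝ)/(k:ℝ)) < t := by
          calc t ^ ((1:ℝ)/(k:ℝ)) < t ^ (1:ℝ) :=
            Real.rpow_lt_rpow_of_exponent_lt ht1 hp1'
          _ = t := Real.rpow_one t
        rw [← h]
        simp only [Nat.sub_self, hb0]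
        linarith [habs.1]
      · -- 2 ≤ n
        have h6n := h6 n hn
        have hanp_pos : 0 < (a n) ^ ((1:ℝ)/(k:ℝ)) := Real.rpow_pos_of_pos (apos n hn) _
        have ha2k : (a n) ^ ((2:ℝ)/(k:ℝ)) ≤ a n := by
          calc (a n) ^ ((2:ℝ)/(k:ℝ)) ≤ (a n) ^ (1:ℝ) :=
            Real.rpow_le_rpow_of_exponent_le han1.le (by rw [div_le_one (by linarith)]; linarith)
          _ = a n := Real.rpow_one _
        have hb2a : b n ≤ 2 * a n := by rw [h4 n hn]; linarith
        have h2p : (b n) ^ ((1:ℝ)/(k:ℝ)) ≤ 2 * (a n) ^ ((1:ℝ)/(k:ℝ)) := by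
          calc (b n) ^ ((1:ℝ)/(k:ℝ)) ≤ (2 * a n) ^ ((1:ℝ)/(k:ℝ)) :=
            Real.rpow_le_rpow (by linarith) hb2a hp0.le
          _ = 2 ^ ((1:ℝ)/(k:ℝ)) * (a n) ^ ((1:ℝ)/(k:ℝ)) :=
            Real.mul_rpow (by norm_num) (by linarith)
          _ ≤ 2 * (a n) ^ ((1:ℝ)/(k:ℝ)) := by
            have h2le : (2:ℝ) ^ ((1:ℝ)/(k:ℝ)) ≤ 2 := by
              calc (2:ℝ) ^ ((1:ℝ)/(k:ℝ)) ≤ 2 ^ (1:ℝ) :=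
                Real.rpow_le_rpow_of_exponent_le one_le_two hp1
              _ = 2 := Real.rpow_one 2
            have := mul_le_mul_of_nonneg_right h2le hanp_pos.le
            linarith
        have h2pow : (2:ℝ) * (a n) ^ ((1:ℝ)/(k:ℝ)) ≤ 2 ^ (n-1) * (a n) ^ ((1:ℝ)/(k:ℝ)) := by
          have h2le2 : (2:ℝ) ≤ 2 ^ (n-1) := by
            calc (2:ℝ) = 2^1 := (pow_one 2).symm
            _ ≤ 2^(n-1) := pow_le_pow_right₀ one_le_two (by omega)
          have := mul_le_mul_of_nonneg_right h2le2 hanp_pos.le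
          linarith
        linarith [habs.1]
    have hup : u < a (n+1) := by
      have h2n1 := h2 (n+1) (by omega)
      simp only [Nat.add_sub_cancel] at h2n1
      linarith [habs.2]
    rcases lt_or_ge u (a n) with hu1 | hu2
    · have hψu := hflat n hn u hun1 hu1
      rw [hψt, hψu]
      have e : c n + (1 - 2 * c n) * ((t - a n)/(b n - a n)) - c n
          = (1 - 2 * c n) * ((t - a n)/(b n - a n)) := by ring
      rw [e, abs_mul, habs_s, one_mul,
        abs_of_nonneg (div_nonneg (by linarith) (by linarith))]
      apply key_frac
      linarith [habs.1]
    · rcases lt_or_ge u (b n) with hu3 | hu4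
      · have hψu := hlin n hn u hu2 hu3
        rw [hψt, hψu]
        have e : (c n + (1 - 2 * c n) * ((t - a n)/(b n - a n)))
            - (c n + (1 - 2 * c n) * ((u - a n)/(b n - a n)))
            = (1 - 2 * c n) * ((t - u)/(b n - a n)) := by ring
        rw [e, abs_mul, habs_s, one_mul, abs_div,
          abs_of_pos (show (0:ℝ) < b n - a n by linarith)]
        apply key_frac
        calc |t - u| = |u - t| := abs_sub_comm t u
        _ ≤ t ^ ((1:ℝ)/(k:ℝ)) := htu
        _ ≤ (b n) ^ ((1:ℝ)/(k:ℝ)) := htp_le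
      · have hψu := hflat (n+1) (by omega) u
          (by simp only [Nat.add_sub_cancel]; exact hu4) hup
        rw [hψt, hψu, hcflip]
        have hne : b n - a n ≠ 0 := by linarith
        have e : c n + (1 - 2 * c n) * ((t - a n)/(b n - a n)) - (1 - c n)
            = (1 - 2 * c n) * ((t - b n)/(b n - a n)) := by
          field_simp
          ring
        rw [e, abs_mul, habs_s, one_mul, abs_div,
          abs_of_pos (show (0:ℝ) < b n - a n by linarith)]
        apply key_frac
        rw [abs_of_nonpos (by linarith : t - b n ≤ 0)]
        linarith [habs.2]
  · -- Case B : t in the flat piece [b n, a (n+1))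
    push_neg at htb
    have hψt := hflat (n+1) (by omega) t
      (by simp only [Nat.add_sub_cancel]; exact htb) hta
    have htp_le1 : t ^ ((1:ℝ)/(k:ℝ)) ≤ (b (n+1)) ^ ((1:ℝ)/(k:ℝ)) :=
      Real.rpow_le_rpow htpos.le (by linarith) hp0.le
    have hmono : b n - (b n) ^ ((1:ℝ)/(k:ℝ)) ≤ t - t ^ ((1:ℝ)/(k:ℝ)) := by
      have := aux_rpow_diff_le hp0.le hp1 hbn1.le htb
      linarith
    have h2le : (2:ℝ) ≤ 2 ^ n := by
      calc (2:ℝ) = 2^1 := (pow_one 2).symm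
      _ ≤ 2^n := pow_le_pow_right₀ one_le_two hn
    have hu_lo : a n < u := by
      have := mul_le_mul_of_nonneg_right h2le hbnp_pos.le
      linarith [habs.1]
    have hu_hi : u < b (n+1) := by
      have h2le' : (2:ℝ) ≤ 2 ^ (n+1) := by
        calc (2:ℝ) = 2^1 := (pow_one 2).symm
        _ ≤ 2^(n+1) := pow_le_pow_right₀ one_le_two (by omega)
      have := mul_le_mul_of_nonneg_right h2le' hb1p_pos.le
      linarith [habs.2]
    rcases lt_or_ge u (b n) with hu1 | hu2
    · have hψu := hlin n hn u hu_lo.le hu1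
      rw [hψt, hψu, hcflip]
      have hne : b n - a n ≠ 0 := by linarith
      have e : (1 - c n) - (c n + (1 - 2 * c n) * ((u - a n)/(b n - a n)))
          = (1 - 2 * c n) * ((b n - u)/(b n - a n)) := by
        field_simp
        ring
      rw [e, abs_mul, habs_s, one_mul, abs_div,
        abs_of_pos (show (0:ℝ) < b n - a n by linarith)]
      apply key_frac
      rw [abs_of_nonneg (by linarith : (0:ℝ) ≤ b n - u)]
      linarith [habs.1]
    · rcases lt_or_ge u (a (n+1)) with hu3 | hu4
      · have hψu := hflat (n+1) (by omega) u
          (by simp only [Nat.add_sub_cancel]; exact hu2) hu3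
        rw [hψt, hψu, sub_self, abs_zero]
        positivity
      · have hψu := hlin (n+1) (by omega) u hu4 hu_hi
        rw [hψt, hψu]
        have e : c (n+1) - (c (n+1) + (1 - 2 * c (n+1)) * ((u - a (n+1))/(b (n+1) - a (n+1))))
            = -((1 - 2 * c (n+1)) * ((u - a (n+1))/(b (n+1) - a (n+1)))) := by ring
        rw [e, abs_neg, abs_mul, habs_s, one_mul, abs_div,
          abs_of_pos (show (0:ℝ) < b (n+1) - a (n+1) by linarith)]
        apply key_frac1
        rw [abs_of_nonneg (by linarith : (0:ℝ) ≤ u - a (n+1))]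
        linarith [habs.2]
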